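/- Suppose in each information set I of player i the cumulative counterfactual regret over iterations 1..T satisfies: increments are bounded by Δ in absolute value during the first T_lim iterations (arbitrary play), and from iteration T_lim+1 to T regret matching⁺ is used so the regret accumulated during those iterations is at most Δ√|A(I)|·√T. Then max_{a ∈ A(I)} R_i^T(I,a) ≤ Δ·T_lim + Δ√|A(I)|·√T, and consequently the average external regret satisfies R_i^T/T ≤ (1/T)(Δ|I_i|√(A_max)·√T + Δ|I_i|·T_lim). -/

import Mathlib

/-!
STATEMENT 11 (Lemma 2 of the paper, eq. (27), two-phase regret decomposition).
`r t I a` is the per-iteration counterfactual regret increment at information set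
`I` and action `a`, so the cumulative regret is `R_i^T(I,a) = ∑_{t<T} r t I a`.
During the warm-up iterations t < T_lim the increments are only bounded by Δ;
over the remaining iterations regret matching⁺ accumulates at most
Δ √|A(I)| √T.  `hext` is the perfect-recall bound R_i^T ≤ Σ_I (R_{i,imm}^T(I))⁺·T.
Conclusions: the per-information-set bound and the resulting bound
R_i^T/T ≤ (1/T)(Δ|I_i|√A_max √T + Δ|I_i| T_lim). -/
theorem stmt11 {Ii A : Type*} [Fintype Ii]
    (act : Ii → Finset A) (hact : ∀ I, (act I).Nonempty)
    (Δ : ℝ) (hΔ : 0 ≤ Δ) (Amax : ℕ) (hAmax : ∀ I, (act I).card ≤ Amax)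
    (T Tlim : ℕ) (hT : 0 < T) (hTlim : Tlim ≤ T)
    (r : ℕ → Ii → A → ℝ)
    (hwarm : ∀ t < Tlim, ∀ I, ∀ a ∈ act I, |r t I a| ≤ Δ)
    (hconv : ∀ I, ∀ a ∈ act I,
      ∑ t ∈ Finset.Ico Tlim T, r t I a ≤ Δ * Real.sqrt (act I).card * Real.sqrt T)
    (Rext : ℝ)
    (hext : Rext ≤ ∑ I : Ii,
      max 0 ((act I).sup' (hact I) fun a => ∑ t ∈ Finset.range T, r t I a)) :
    (∀ I, ∀ a ∈ act I,
      ∑ t ∈ Finset.range T, r t I a ≤ Δ * Tlim + Δ * Real.sqrt (act I).card * Real.sqrt T) ∧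
    Rext / T ≤ (1 / (T : ℝ)) *
      (Δ * (Fintype.card Ii) * Real.sqrt Amax * Real.sqrt T
        + Δ * (Fintype.card Ii) * Tlim) := by
  have key : ∀ I, ∀ a ∈ act I,
      ∑ t ∈ Finset.range T, r t I a ≤ Δ * Tlim + Δ * Real.sqrt (act I).card * Real.sqrt T := by
    intro I a ha
    have hsplit : ∑ t ∈ Finset.range T, r t I a
        = ∑ t ∈ Finset.range Tlim, r t I a + ∑ t ∈ Finset.Ico Tlim T, r t I a := by
      rw [Finset.range_eq_Ico, ← Finset.sum_Ico_consecutive _ (Nat.zero_le Tlim) hTlim, Finset.range_eq_Ico]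
    rw [hsplit]
    have h1 : ∑ t ∈ Finset.range Tlim, r t I a ≤ Δ * Tlim := by
      calc ∑ t ∈ Finset.range Tlim, r t I a ≤ ∑ t ∈ Finset.range Tlim, Δ := by
            apply Finset.sum_le_sum
            intro t ht
            exact (abs_le.mp (hwarm t (Finset.mem_range.mp ht) I a ha)).2
        _ = Δ * Tlim := by rw [Finset.sum_const, Finset.card_range, nsmul_eq_mul, mul_comm]
    linarith [hconv I a ha]
  refine ⟨key, ?_⟩
  have hbound : ∀ I : Ii,
      max 0 ((act I).sup' (hact I) fun a => ∑ t ∈ Finset.range T, r t I a)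
        ≤ Δ * Real.sqrt Amax * Real.sqrt T + Δ * Tlim := by
    intro I
    have hb : Δ * Tlim + Δ * Real.sqrt (act I).card * Real.sqrt T
        ≤ Δ * Real.sqrt Amax * Real.sqrt T + Δ * Tlim := by
      have : Real.sqrt (act I).card ≤ Real.sqrt Amax :=
        Real.sqrt_le_sqrt (by exact_mod_cast hAmax I)
      have h2 := mul_le_mul_of_nonneg_right (mul_le_mul_of_nonneg_left this hΔ)
        (Real.sqrt_nonneg (T : ℝ))
      linarith
    apply max_le
    · positivity
    · apply le_trans _ hb
      apply Finset.sup'_le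
      intro a ha
      exact key I a ha
  have hsum : Rext ≤ Fintype.card Ii • (Δ * Real.sqrt Amax * Real.sqrt T + Δ * Tlim) := by
    calc Rext ≤ _ := hext
      _ ≤ ∑ _I : Ii, (Δ * Real.sqrt Amax * Real.sqrt T + Δ * Tlim) :=
          Finset.sum_le_sum fun I _ => hbound I
      _ = _ := by rw [Finset.sum_const, Finset.card_univ]
  rw [nsmul_eq_mul] at hsum
  have hTpos : (0:ℝ) < T := by exact_mod_cast hT
  rw [div_le_iff₀ hTpos]
  calc Rext ≤ _ := hsum
    _ = (1 / (T:ℝ)) * (Δ * (Fintype.card Ii) * Real.sqrt Amax * Real.sqrt T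
        + Δ * (Fintype.card Ii) * Tlim) * T := by field_simp
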